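/- Let γ : [0,1] → ℂ be a continuously differentiable path satisfying γ(1−t) = −conj(γ(t)) for all t ∈ [0,1]. Let f, ρ : ℂ → ℂ be continuous functions satisfying f(−conj(z)) = conj(f(z)) and ρ(−conj(z)) = conj(ρ(z)) for all z ∈ ℂ. Then the contour integral g = ∫_C f(α)·ρ(α) dα is a real number. -/

import Mathlib

/-- Contour integral of `f` along the path `γ : [0,1] → ℂ`:
`∫_C f(β) dβ := ∫₀¹ f(γ(t)) γ'(t) dt`. -/
noncomputable def cInt (γ : ℝ → ℂ) (f : ℂ → ℂ) : ℂ :=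
  ∫ t in (0:ℝ)..1, f (γ t) * deriv γ t

/-- if the contour satisfies `γ(1−t) = −conj(γ(t))` on `[0,1]` and
`f`, `ρ` are continuous, satisfying `f(−z*) = f(z)*` and `ρ(−z*) = ρ(z)*`, then the
contour integral `g = ∫_C f(α)·ρ(α) dα` is real. -/
theorem stmt_2 (γ : ℝ → ℂ) (hγ : ContDiff ℝ 1 γ)
    (hsym : ∀ t ∈ Set.Icc (0:ℝ) 1, γ (1 - t) = -(starRingEnd ℂ) (γ t))
    (f ρ : ℂ → ℂ) (hf : Continuous f) (hρ : Continuous ρ)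
    (hfs : ∀ z : ℂ, f (-(starRingEnd ℂ) z) = (starRingEnd ℂ) (f z))
    (hρs : ∀ z : ℂ, ρ (-(starRingEnd ℂ) z) = (starRingEnd ℂ) (ρ z)) :
    (cInt γ (fun α => f α * ρ α)).im = 0 := by
  set F : ℂ → ℂ := fun α => f α * ρ α with hF
  have hFs : ∀ z : ℂ, F (-(starRingEnd ℂ) z) = (starRingEnd ℂ) (F z) := by
    intro z; simp [hF, hfs, hρs]
  have hγd : Differentiable ℝ γ := hγ.differentiable one_ne_zero
  have hderiv : ∀ t ∈ Set.Ioo (0:ℝ) 1,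
      deriv γ (1 - t) = (starRingEnd ℂ) (deriv γ t) := by
    intro t ht
    have h1 : HasDerivAt (fun s : ℝ => γ (1 - s)) (-(deriv γ (1 - t))) t := by
      have hinner : HasDerivAt (fun s : ℝ => 1 - s) (-1) t := by
        simpa using (hasDerivAt_id t).const_sub 1
      have := (hγd (1 - t)).hasDerivAt.scomp t hinner
      simp [Function.comp] at this
      exact this
    have hc : HasDerivAt (fun s : ℝ => (starRingEnd ℂ) (γ s))
        ((starRingEnd ℂ) (deriv γ t)) t := by
      have := (Complex.conjCLE.toContinuousLinearMap.hasFDerivAt.comp_hasDerivAt t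
          (hγd t).hasDerivAt)
      simp at this
      exact this
    have h2 : HasDerivAt (fun s : ℝ => -(starRingEnd ℂ) (γ s))
        (-(starRingEnd ℂ) (deriv γ t)) t := hc.neg
    have heq : (fun s : ℝ => γ (1 - s)) =ᶠ[nhds t]
        (fun s : ℝ => -(starRingEnd ℂ) (γ s)) := by
      filter_upwards [Ioo_mem_nhds ht.1 ht.2] with s hs
      exact hsym s ⟨hs.1.le, hs.2.le⟩
    have h12 : -(deriv γ (1 - t)) = -(starRingEnd ℂ) (deriv γ t) := by
      rw [← h1.deriv, ← h2.deriv]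
      exact heq.deriv_eq
    exact neg_injective h12
  have hone : ∀ᵐ t : ℝ ∂MeasureTheory.volume, t ≠ (1:ℝ) := by
    rw [MeasureTheory.ae_iff]
    simp
  have hcongr : ∀ᵐ t : ℝ ∂MeasureTheory.volume, t ∈ Set.uIoc (0:ℝ) 1 →
      (starRingEnd ℂ) (F (γ t) * deriv γ t) = F (γ (1 - t)) * deriv γ (1 - t) := by
    filter_upwards [hone] with t ht hmem
    rw [Set.uIoc_of_le (by norm_num : (0:ℝ) ≤ 1)] at hmem
    have htIoo : t ∈ Set.Ioo (0:ℝ) 1 := ⟨hmem.1, lt_of_le_of_ne hmem.2 ht⟩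
    rw [hsym t ⟨htIoo.1.le, htIoo.2.le⟩, hFs, hderiv t htIoo, map_mul]
  have key : (starRingEnd ℂ) (cInt γ F) = cInt γ F := by
    have hconjint : ∀ g : ℝ → ℂ,
        (starRingEnd ℂ) (∫ t in (0:ℝ)..1, g t) = ∫ t in (0:ℝ)..1, (starRingEnd ℂ) (g t) := by
      intro g
      simp [intervalIntegral, integral_conj, map_sub]
    rw [cInt, hconjint]
    calc ∫ t in (0:ℝ)..1, (starRingEnd ℂ) (F (γ t) * deriv γ t)
        = ∫ t in (0:ℝ)..1, F (γ (1 - t)) * deriv γ (1 - t) :=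
          intervalIntegral.integral_congr_ae hcongr
      _ = ∫ t in (0:ℝ)..1, F (γ t) * deriv γ t := by
          simpa using
            intervalIntegral.integral_comp_sub_left
              (a := (0:ℝ)) (b := 1) (fun u => F (γ u) * deriv γ u) 1
  exact Complex.conj_eq_iff_im.mp key
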